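/- For every natural number n and every open neighborhood U of the identity in SL(2,ℝ), there exists an open neighborhood Uₙ of the identity with Uₙ ⊆ U such that: (i) for all g ∈ SL(2,ℝ), g ∈ Uₙ if and only if g⁻¹ ∈ Uₙ; and (ii) for every k with 1 ≤ k ≤ n and all positive elements g₁,…,g_k ∈ Uₙ, the product g₁⋯g_k is a positive element and lies in U. -/

import Mathlib

/-- The topology on `SL(2,ℝ)` as a subspace of the `2×2` real matrices. -/
noncomputable instance : TopologicalSpace (Matrix.SpecialLinearGroup (Fin 2) ℝ) :=
  instTopologicalSpaceSubtype

/-- An element of `SL(2,ℝ)` is positive if its lower-left entry is positive. -/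
def IsPos (g : Matrix.SpecialLinearGroup (Fin 2) ℝ) : Prop :=
  0 < (g : Matrix (Fin 2) (Fin 2) ℝ) 1 0

namespace SL2Aux

abbrev G := Matrix.SpecialLinearGroup (Fin 2) ℝ

lemma continuous_coe : Continuous (fun g : G => (g : Matrix (Fin 2) (Fin 2) ℝ)) :=
  continuous_subtype_val

instance : ContinuousMul G := by
  constructor
  apply Continuous.subtype_mk
  show Continuous fun p : G × G => ((p.1 * p.2 : G) : Matrix (Fin 2) (Fin 2) ℝ)
  simp only [Matrix.SpecialLinearGroup.coe_mul]
  exact Continuous.matrix_mul (continuous_coe.comp continuous_fst)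
    (continuous_coe.comp continuous_snd)

instance : ContinuousInv G := by
  constructor
  apply Continuous.subtype_mk
  show Continuous fun g : G => ((g⁻¹ : G) : Matrix (Fin 2) (Fin 2) ℝ)
  simp only [Matrix.SpecialLinearGroup.coe_inv]
  exact continuous_coe.matrix_adjugate

lemma entry_open (i j : Fin 2) : IsOpen {g : G | 0 < (g : Matrix (Fin 2) (Fin 2) ℝ) i j} := by
  have h : Continuous fun g : G => (g : Matrix (Fin 2) (Fin 2) ℝ) i j := by
    exact ((continuous_apply j).comp ((continuous_apply i).comp continuous_coe))
  exact isOpen_lt continuous_const h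

/-- products of at most m elements of a suitable open nbhd stay in U -/
lemma key (U : Set G) (hUopen : IsOpen U) (hU1 : (1 : G) ∈ U) :
    ∀ m : ℕ, ∃ V : Set G, IsOpen V ∧ (1 : G) ∈ V ∧ V ⊆ U ∧
      ∀ l : List G, l.length ≤ m → (∀ x ∈ l, x ∈ V) → l.prod ∈ U := by
  intro m
  induction m with
  | zero =>
      exact ⟨U, hUopen, hU1, subset_rfl, by
        intro l hl _
        rw [Nat.le_zero, List.length_eq_zero_iff] at hl
        simpa [hl] using hU1⟩
  | succ m ih =>
      obtain ⟨V, hVopen, hV1, hVU, hV⟩ := ih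
      obtain ⟨W, hWopen, hW1, hWW⟩ :=
        exists_open_nhds_one_mul_subset (hVopen.mem_nhds hV1)
      refine ⟨W ∩ V, hWopen.inter hVopen, ⟨hW1, hV1⟩, fun x hx => hVU hx.2, ?_⟩
      intro l hl hmem
      match l with
      | [] => simpa using hU1
      | [a] => simpa using hVU (hmem a (by simp)).2
      | a :: b :: t =>
          have : ((a * b) :: t).prod = (a :: b :: t).prod := by
            simp [List.prod_cons, mul_assoc]
          rw [← this]
          apply hV
          · simpa using Nat.succ_le_succ_iff.mp hl
          · intro x hx
            rcases List.mem_cons.mp hx with h | h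
            · subst h
              exact hWW (Set.mul_mem_mul (hmem a (by simp)).1 (hmem b (by simp)).1)
            · exact (hmem x (by simp [h])).2

end SL2Aux

open SL2Aux in
theorem stmt7 (n : ℕ) (U : Set (Matrix.SpecialLinearGroup (Fin 2) ℝ))
    (hUopen : IsOpen U) (hU1 : (1 : Matrix.SpecialLinearGroup (Fin 2) ℝ) ∈ U) :
    ∃ Un : Set (Matrix.SpecialLinearGroup (Fin 2) ℝ),
      IsOpen Un ∧ (1 : Matrix.SpecialLinearGroup (Fin 2) ℝ) ∈ Un ∧ Un ⊆ U ∧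
      (∀ g : Matrix.SpecialLinearGroup (Fin 2) ℝ, g ∈ Un ↔ g⁻¹ ∈ Un) ∧
      (∀ k : ℕ, 1 ≤ k → k ≤ n →
        ∀ g : Fin k → Matrix.SpecialLinearGroup (Fin 2) ℝ,
          (∀ i, g i ∈ Un ∧ IsPos (g i)) →
            IsPos (List.ofFn g).prod ∧ (List.ofFn g).prod ∈ U) := by
  -- U' : U with positive diagonal entries
  set U' : Set G := U ∩ ({g : G | 0 < (g : Matrix (Fin 2) (Fin 2) ℝ) 0 0}
      ∩ {g : G | 0 < (g : Matrix (Fin 2) (Fin 2) ℝ) 1 1}) with hU'def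
  have hU'open : IsOpen U' := hUopen.inter ((entry_open 0 0).inter (entry_open 1 1))
  have hU'1 : (1 : G) ∈ U' := by
    refine ⟨hU1, ?_, ?_⟩ <;> simp [Matrix.SpecialLinearGroup.coe_one]
  obtain ⟨V, hVopen, hV1, hVU', hV⟩ := key U' hU'open hU'1 n
  refine ⟨V ∩ V⁻¹, hVopen.inter (hVopen.preimage continuous_inv), ⟨hV1, by simpa using hV1⟩,
    fun x hx => (hVU' hx.1).1, ?_, ?_⟩
  · intro g
    constructor
    · rintro ⟨h1, h2⟩; exact ⟨h2, by simpa using h1⟩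
    · rintro ⟨h1, h2⟩; exact ⟨by simpa using h2, h1⟩
  · intro k hk1 hkn g hg
    -- key positivity: nonempty lists of positive elements of V have positive product in U'
    have main : ∀ l : List G, l ≠ [] → l.length ≤ n →
        (∀ x ∈ l, x ∈ V ∧ IsPos x) → IsPos l.prod ∧ l.prod ∈ U' := by
      intro l
      induction l with
      | nil => intro h; exact absurd rfl h
      | cons a t ih =>
          intro _ hlen hmem
          have hmemU' : (a :: t).prod ∈ U' := by
            apply hV _ hlen
            intro x hx; exact (hmem x hx).1
          refine ⟨?_, hmemU'⟩
          match t with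
          | [] => simpa using (hmem a (by simp)).2
          | b :: s =>
              have ht : IsPos (b :: s).prod ∧ (b :: s).prod ∈ U' := by
                apply ih (by simp) (le_trans (by simp) hlen)
                intro x hx; exact hmem x (by simp [hx])
              have haU' : a ∈ U' := hVU' (hmem a (by simp)).1
              have hapos : IsPos a := (hmem a (by simp)).2
              rw [List.prod_cons]
              show 0 < ((a * (b :: s).prod : G) : Matrix (Fin 2) (Fin 2) ℝ) 1 0
              rw [Matrix.SpecialLinearGroup.coe_mul, Matrix.mul_apply, Fin.sum_univ_two]
              have h1 : 0 < (a : Matrix (Fin 2) (Fin 2) ℝ) 1 0 *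
                  (((b :: s).prod : G) : Matrix (Fin 2) (Fin 2) ℝ) 0 0 :=
                mul_pos hapos ht.2.2.1
              have h2 : 0 < (a : Matrix (Fin 2) (Fin 2) ℝ) 1 1 *
                  (((b :: s).prod : G) : Matrix (Fin 2) (Fin 2) ℝ) 1 0 :=
                mul_pos haU'.2.2 ht.1
              linarith
    have hlist := main (List.ofFn g)
      (by
        intro h
        have := congrArg List.length h
        simp at this
        omega)
      (by simpa using hkn)
      (by
        intro x hx
        obtain ⟨i, rfl⟩ := List.mem_ofFn.mp hx
        exact ⟨(hg i).1.1, (hg i).2⟩)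
    exact ⟨hlist.1, hlist.2.1⟩
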